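/- Let A be a unital C*-algebra and a ∈ A a positive element. Suppose there exist real numbers α, β with 0 < α < β and constants c, C > 0 such that c · r_{a^α}(f) ≤ r_{a^β}(f) ≤ C · r_{a^α}(f) for every hermitian continuous linear functional f on A. Then for every real γ > 0 the seminorms r_{a^γ} and r_a are equivalent, i.e. there exist constants c', C' > 0 with c' · r_a(f) ≤ r_{a^γ}(f) ≤ C' · r_a(f) for all hermitian continuous linear functionals f. -/

import Mathlib

open scoped ComplexOrder NNReal

variable {A : Type*} [CStarAlgebra A] [PartialOrder A] [StarOrderedRing A]

/-- A continuous linear functional on a C*-algebra is positive if it is nonnegative on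
positive elements (using the complex order). -/
def IsPosFunctional {A : Type*} [CStarAlgebra A] [PartialOrder A] [StarOrderedRing A]
    (f : A →L[ℂ] ℂ) : Prop :=
  ∀ x : A, 0 ≤ x → 0 ≤ f x

/-- A continuous linear functional is hermitian if `f (star x) = conj (f x)` for all `x`. -/
def IsHermitianFunctional {A : Type*} [CStarAlgebra A] (f : A →L[ℂ] ℂ) : Prop :=
  ∀ x : A, f (star x) = starRingEnd ℂ (f x)

/-- The seminorm `r_a` associated with a positive element `a`:
`r_a(f) = inf { f₁(a) + f₂(a) | f = f₁ - f₂, f₁, f₂ positive }`. -/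
noncomputable def rSeminorm {A : Type*} [CStarAlgebra A] [PartialOrder A] [StarOrderedRing A]
    (a : A) (f : A →L[ℂ] ℂ) : ℝ :=
  sInf { r : ℝ | ∃ f₁ f₂ : A →L[ℂ] ℂ, IsPosFunctional f₁ ∧ IsPosFunctional f₂ ∧
    f = f₁ - f₂ ∧ (r : ℂ) = f₁ a + f₂ a }

/-! ### Auxiliary lemmas -/

section Aux

variable {f : A →L[ℂ] ℂ}

lemma posFun_eq_re (hf : IsPosFunctional f) {x : A} (hx : 0 ≤ x) :
    f x = ((f x).re : ℂ) := by
  have := hf x hx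
  rw [Complex.nonneg_iff] at this
  exact Complex.ext rfl (by simp [this.2])

lemma posFun_re_nonneg (hf : IsPosFunctional f) {x : A} (hx : 0 ≤ x) :
    0 ≤ (f x).re := ((Complex.nonneg_iff).mp (hf x hx)).1

lemma posFun_selfAdjoint_real (hf : IsPosFunctional f) {y : A} (hy : IsSelfAdjoint y) :
    f y = ((f y).re : ℂ) := by
  have h2 : f y = f y⁺ - f y⁻ := by
    conv_lhs => rw [← CFC.posPart_sub_negPart y hy]
    simp
  rw [h2, posFun_eq_re hf (CFC.posPart_nonneg y), posFun_eq_re hf (CFC.negPart_nonneg y)]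
  simp

lemma posFun_hermitian (hf : IsPosFunctional f) : IsHermitianFunctional f := by
  intro x
  set h : A := (2 : ℂ)⁻¹ • (x + star x) with hh
  set k : A := (-(Complex.I) * (2 : ℂ)⁻¹) • (x - star x) with hk
  have hI : Complex.I * (-Complex.I * (2:ℂ)⁻¹) = (2:ℂ)⁻¹ := by
    rw [← mul_assoc, mul_neg, Complex.I_mul_I, neg_neg, one_mul]
  have hhsa : IsSelfAdjoint h := by
    rw [hh, IsSelfAdjoint, star_smul, star_add, star_star, add_comm]
    simp [starRingEnd]
  have hksa : IsSelfAdjoint k := by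
    rw [hk, IsSelfAdjoint, star_smul, star_sub, star_star]
    have : star (-Complex.I * (2:ℂ)⁻¹) = Complex.I * (2:ℂ)⁻¹ := by
      simp [Complex.star_def]
    rw [this]
    module
  have hx : x = h + Complex.I • k := by rw [hh, hk, smul_smul, hI]; module
  have hsx : star x = h - Complex.I • k := by rw [hh, hk, smul_smul, hI]; module
  have fh := posFun_selfAdjoint_real hf hhsa
  have fk := posFun_selfAdjoint_real hf hksa
  rw [hsx]
  conv_rhs => rw [hx]
  simp only [map_add, map_sub, map_smul]
  rw [fh, fk]
  simp [Complex.ext_iff]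

/-- For a positive functional, `rSeminorm x f = (f x).re`. -/
lemma rSeminorm_posFun (hf : IsPosFunctional f) {x : A} (hx : 0 ≤ x) :
    rSeminorm x f = (f x).re := by
  have hmem : (f x).re ∈ { r : ℝ | ∃ f₁ f₂ : A →L[ℂ] ℂ, IsPosFunctional f₁ ∧ IsPosFunctional f₂ ∧
      f = f₁ - f₂ ∧ (r : ℂ) = f₁ x + f₂ x } := by
    refine ⟨f, 0, hf, fun y hy => le_refl 0, by simp, ?_⟩
    simp [← posFun_eq_re hf hx]
  have hlb : ∀ r ∈ { r : ℝ | ∃ f₁ f₂ : A →L[ℂ] ℂ, IsPosFunctional f₁ ∧ IsPosFunctional f₂ ∧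
      f = f₁ - f₂ ∧ (r : ℂ) = f₁ x + f₂ x }, (f x).re ≤ r := by
    rintro r ⟨f₁, f₂, h₁, h₂, hd, hr⟩
    have hfx : f x = f₁ x - f₂ x := by rw [hd]; simp
    have : r = (f₁ x).re + (f₂ x).re := by
      have := congrArg Complex.re hr
      simpa using this
    rw [this, hfx]
    have := posFun_re_nonneg h₂ hx
    simp only [Complex.sub_re]
    linarith
  exact le_antisymm (csInf_le ⟨(f x).re, hlb⟩ hmem) (le_csInf ⟨_, hmem⟩ hlb)

lemma posFun_coe_add_re {f₁ f₂ : A →L[ℂ] ℂ} (h₁ : IsPosFunctional f₁)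
    (h₂ : IsPosFunctional f₂) {x : A} (hx : 0 ≤ x) :
    (((f₁ x).re + (f₂ x).re : ℝ) : ℂ) = f₁ x + f₂ x := by
  have e1 := posFun_eq_re h₁ hx
  have e2 := posFun_eq_re h₂ hx
  rw [Complex.ofReal_add, ← e1, ← e2]

/-- Transfer of pointwise inequalities on positive functionals to the seminorms. -/
lemma rSeminorm_le_of_posFun {x y : A} (hx : 0 ≤ x) (hy : 0 ≤ y) {K : ℝ} (hK : 0 < K)
    (hfK : ∀ f : A →L[ℂ] ℂ, IsPosFunctional f → (f x).re ≤ K * (f y).re) :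
    ∀ g : A →L[ℂ] ℂ, rSeminorm x g ≤ K * rSeminorm y g := by
  intro g
  set Sx := { r : ℝ | ∃ f₁ f₂ : A →L[ℂ] ℂ, IsPosFunctional f₁ ∧ IsPosFunctional f₂ ∧
      g = f₁ - f₂ ∧ (r : ℂ) = f₁ x + f₂ x } with hSx
  set Sy := { r : ℝ | ∃ f₁ f₂ : A →L[ℂ] ℂ, IsPosFunctional f₁ ∧ IsPosFunctional f₂ ∧
      g = f₁ - f₂ ∧ (r : ℂ) = f₁ y + f₂ y } with hSy
  have hex : rSeminorm x g = sInf Sx := rfl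
  have hey : rSeminorm y g = sInf Sy := rfl
  by_cases hney : Sy.Nonempty
  · have hbdd : BddBelow Sx := by
      refine ⟨0, ?_⟩
      rintro r' ⟨g₁, g₂, hg₁, hg₂, _, hr'⟩
      have hre : r' = (g₁ x).re + (g₂ x).re := by
        have := congrArg Complex.re hr'
        simpa using this
      have b1 := posFun_re_nonneg hg₁ hx
      have b2 := posFun_re_nonneg hg₂ hx
      linarith
    have key : ∀ r ∈ Sy, sInf Sx ≤ K * r := by
      rintro r ⟨f₁, f₂, h₁, h₂, hd, hr⟩
      have hxmem : (f₁ x).re + (f₂ x).re ∈ Sx :=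
        ⟨f₁, f₂, h₁, h₂, hd, posFun_coe_add_re h₁ h₂ hx⟩
      have hry : r = (f₁ y).re + (f₂ y).re := by
        have := congrArg Complex.re hr
        simpa using this
      have a1 := hfK f₁ h₁
      have a2 := hfK f₂ h₂
      have h1 : sInf Sx ≤ (f₁ x).re + (f₂ x).re := csInf_le hbdd hxmem
      rw [hry]
      linarith
    have hdiv : sInf Sx / K ≤ sInf Sy := by
      apply le_csInf hney
      intro r hr
      rw [div_le_iff₀ hK]
      calc sInf Sx ≤ K * r := key r hr
        _ = r * K := by ring
    rw [hex, hey]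
    calc sInf Sx = (sInf Sx / K) * K := by field_simp
      _ ≤ sInf Sy * K := mul_le_mul_of_nonneg_right hdiv hK.le
      _ = K * sInf Sy := by ring
  · have hnex : ¬ Sx.Nonempty := by
      rintro ⟨r, f₁, f₂, h₁, h₂, hd, hr⟩
      exact hney ⟨(f₁ y).re + (f₂ y).re, f₁, f₂, h₁, h₂, hd,
        posFun_coe_add_re h₁ h₂ hy⟩
    rw [hex, hey, Set.not_nonempty_iff_eq_empty.mp hnex,
      Set.not_nonempty_iff_eq_empty.mp hney, Real.sInf_empty, mul_zero]

lemma rpow_eq_cfc_real (a : A) (ha : 0 ≤ a) (γ : ℝ) :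
    a ^ γ = cfc (fun t : ℝ => t ^ γ) a := by
  exact CFC.rpow_eq_cfc_real ha

lemma cont_rpow (γ : ℝ) (hγ : 0 < γ) : Continuous (fun t : ℝ => t ^ γ) :=
  continuous_iff_continuousAt.mpr fun t => Real.continuousAt_rpow_const t γ (Or.inr hγ.le)

/-- The conjugated functional `x ↦ f (b x b)`. -/
noncomputable def conjFun (f : A →L[ℂ] ℂ) (b : A) : A →L[ℂ] ℂ :=
  f.comp (((ContinuousLinearMap.mul ℂ A) b).comp (((ContinuousLinearMap.mul ℂ A).flip) b))

lemma conjFun_apply (f : A →L[ℂ] ℂ) (b x : A) : conjFun f b x = f (b * (x * b)) := rfl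

lemma conjFun_pos (hf : IsPosFunctional f) {b : A} (hb : IsSelfAdjoint b) :
    IsPosFunctional (conjFun f b) := by
  intro x hx
  rw [conjFun_apply]
  apply hf
  have := star_left_conjugate_nonneg hx b
  rwa [hb.star_eq, mul_assoc] at this

lemma posFun_mono (hf : IsPosFunctional f) {x y : A} (hxy : x ≤ y) :
    (f x).re ≤ (f y).re := by
  have h0 : 0 ≤ y - x := sub_nonneg.mpr hxy
  have := ((Complex.nonneg_iff).mp (hf _ h0)).1
  simp only [map_sub, Complex.sub_re] at this
  linarith

lemma re_smul (r : ℝ) (z : ℂ) : (r • z).re = r * z.re := by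
  simp [Complex.real_smul, Complex.mul_re]

lemma f_real_smul (f : A →L[ℂ] ℂ) (r : ℝ) (x : A) : f (r • x) = r • f x :=
  f.map_smul_of_tower r x

/-- The key annihilation lemma: functions supported in the spectral gap `(0, ε)`
evaluate to zero under positive functionals. -/
lemma key_annihilation (a : A) (ha : 0 ≤ a) (α β : ℝ) (hα : 0 < α) (hαβ : α < β)
    (c : ℝ) (hc : 0 < c)
    (Hpos : ∀ g : A →L[ℂ] ℂ, IsPosFunctional g →
      c * (g (a ^ α)).re ≤ (g (a ^ β)).re)
    (hf : IsPosFunctional f)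
    (w : ℝ → ℝ) (hw_cont : Continuous w) (hw0 : ∀ t, 0 ≤ w t)
    (hsupp : ∀ t ∈ spectrum ℝ a, (t = 0 ∨ c ^ (β - α)⁻¹ ≤ t) → w t = 0) :
    (f (cfc w a)).re ≤ 0 := by
  have hβα : 0 < β - α := by linarith
  have hβ : 0 < β := hα.trans hαβ
  set ε : ℝ := c ^ (β - α)⁻¹ with hε
  have hεpos : 0 < ε := Real.rpow_pos_of_pos hc _
  have hεpow : ε ^ (β - α) = c := by
    rw [hε, ← Real.rpow_mul hc.le, inv_mul_cancel₀ hβα.ne', Real.rpow_one]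
  suffices hsuf : ∀ η : ℝ, 0 < η → (f (cfc w a)).re ≤ η * (f 1).re by
    by_contra hX
    push_neg at hX
    have h1 : 0 ≤ (f 1).re := posFun_re_nonneg hf zero_le_one
    set X := (f (cfc w a)).re
    have hη : 0 < X / (2 * ((f 1).re + 1)) := by positivity
    have h2 := hsuf _ hη
    rw [div_mul_eq_mul_div, le_div_iff₀ (by positivity)] at h2
    nlinarith [mul_nonneg hX.le h1]
  intro η hη
  set v : ℝ → ℝ := fun t => max (w t - η) 0 with hv
  have hv_cont : Continuous v := (hw_cont.sub continuous_const).max continuous_const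
  have hv0 : ∀ t, 0 ≤ v t := fun t => le_max_right _ _
  suffices hv_key : (f (cfc v a)).re ≤ 0 by
    have hw_le : ∀ t, w t ≤ v t + η := fun t => by
      have := le_max_left (w t - η) (0:ℝ); simp only [hv]; linarith
    have step1 : cfc w a ≤ cfc (fun t => v t + η) a :=
      cfc_mono (fun t _ => hw_le t) hw_cont.continuousOn
        ((hv_cont.add continuous_const).continuousOn)
    have step2 : cfc (fun t => v t + η) a = cfc v a + algebraMap ℝ A η := by
      rw [cfc_add a v (fun _ => η) hv_cont.continuousOn continuous_const.continuousOn,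
        cfc_const η a (IsSelfAdjoint.of_nonneg ha)]
    have step3 : (f (cfc w a)).re ≤ (f (cfc v a + algebraMap ℝ A η)).re := by
      rw [← step2]; exact posFun_mono hf step1
    have step4 : (f (cfc v a + algebraMap ℝ A η)).re
        = (f (cfc v a)).re + η * (f 1).re := by
      rw [map_add, Algebra.algebraMap_eq_smul_one, f_real_smul, Complex.add_re, re_smul]
    have h1 : 0 ≤ (f 1).re := posFun_re_nonneg hf zero_le_one
    calc (f (cfc w a)).re ≤ (f (cfc v a)).re + η * (f 1).re := by rw [← step4]; exact step3
      _ ≤ η * (f 1).re := by linarith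
  set S := spectrum ℝ a ∩ w ⁻¹' (Set.Ici η) with hS
  by_cases hSne : S.Nonempty
  · have hScomp : IsCompact S :=
      (spectrum.isCompact a).inter_right (isClosed_Ici.preimage hw_cont)
    set p : ℝ → ℝ := fun t => c * t ^ α - t ^ β with hp
    have hp_cont : Continuous p :=
      (continuous_const.mul (cont_rpow α hα)).sub (cont_rpow β hβ)
    obtain ⟨t₀, ht₀S, hmin⟩ := hScomp.exists_isMinOn hSne hp_cont.continuousOn
    have ht₀σ : t₀ ∈ spectrum ℝ a := ht₀S.1
    have ht₀w : η ≤ w t₀ := ht₀S.2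
    have ht₀pos : 0 < t₀ := by
      rcases (spectrum_nonneg_of_nonneg ha ht₀σ).lt_or_eq with h' | h'
      · exact h'
      · exfalso; have := hsupp t₀ ht₀σ (Or.inl h'.symm); linarith
    have ht₀lt : t₀ < ε := by
      by_contra hcon
      push_neg at hcon
      have := hsupp t₀ ht₀σ (Or.inr hcon)
      linarith
    set m : ℝ := p t₀ with hm_def
    have hm : 0 < m := by
      have h1 : t₀ ^ (β - α) < c := by
        calc t₀ ^ (β - α) < ε ^ (β - α) := Real.rpow_lt_rpow ht₀pos.le ht₀lt hβα
          _ = c := hεpow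
      have h2 : t₀ ^ β = t₀ ^ α * t₀ ^ (β - α) := by
        rw [← Real.rpow_add ht₀pos]; ring_nf
      have h3 : 0 < t₀ ^ α := Real.rpow_pos_of_pos ht₀pos α
      have he : m = c * t₀ ^ α - t₀ ^ β := rfl
      rw [he, h2]; nlinarith
    have hpt : ∀ t ∈ S, m ≤ p t := fun t ht => hmin ht
    have pointwise : ∀ t ∈ spectrum ℝ a, v t ≤ m⁻¹ * (v t * p t) := by
      intro t ht
      by_cases hwt : η ≤ w t
      · have hptS := hpt t ⟨ht, hwt⟩
        have hvt := hv0 t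
        have hmul : m * v t ≤ v t * p t := by nlinarith
        calc v t = m⁻¹ * (m * v t) := by field_simp
          _ ≤ m⁻¹ * (v t * p t) :=
            mul_le_mul_of_nonneg_left hmul (inv_nonneg.mpr hm.le)
      · have hvt0 : v t = 0 := by
          simp only [hv, max_eq_right_iff]; linarith
        rw [hvt0]; simp
    set h₀ : ℝ → ℝ := fun t => Real.sqrt (v t) with hh₀def
    have hh₀ : Continuous h₀ := Real.continuous_sqrt.comp hv_cont
    set b : A := cfc h₀ a with hb_def
    have hb : IsSelfAdjoint b := IsSelfAdjoint.cfc
    have step : cfc v a ≤ cfc (fun t => m⁻¹ * (v t * p t)) a :=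
      cfc_mono pointwise hv_cont.continuousOn
        (continuous_const.mul (hv_cont.mul hp_cont)).continuousOn
    have eq1 : cfc (fun t => m⁻¹ * (v t * p t)) a
        = m⁻¹ • cfc (fun t => v t * p t) a :=
      cfc_const_mul m⁻¹ _ a (hv_cont.mul hp_cont).continuousOn
    have eq2 : cfc (fun t => v t * p t) a = cfc (fun t => (h₀ t * p t) * h₀ t) a := by
      apply cfc_congr
      intro t _
      have hts : h₀ t * h₀ t = v t := Real.mul_self_sqrt (hv0 t)
      simp only []
      rw [← hts]; ring
    have eq3 : cfc (fun t => (h₀ t * p t) * h₀ t) a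
        = (cfc (fun t => h₀ t * p t) a) * b := by
      rw [hb_def]
      exact cfc_mul _ _ a (hh₀.mul hp_cont).continuousOn hh₀.continuousOn
    have eq4 : cfc (fun t => h₀ t * p t) a = b * cfc p a := by
      rw [hb_def]
      exact cfc_mul _ _ a hh₀.continuousOn hp_cont.continuousOn
    have eq5 : cfc p a = c • (a ^ α) - a ^ β := by
      rw [hp]
      rw [cfc_sub (fun t => c * t ^ α) (fun t => t ^ β) a (continuous_const.mul (cont_rpow α hα)).continuousOn
        (cont_rpow β hβ).continuousOn,
        cfc_const_mul c (fun t => t ^ α) a (cont_rpow α hα).continuousOn,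
        ← rpow_eq_cfc_real a ha α, ← rpow_eq_cfc_real a ha β]
    set g := conjFun f b with hg_def
    have hg : IsPosFunctional g := conjFun_pos hf hb
    have key : (f (b * cfc p a * b)).re = c * (g (a ^ α)).re - (g (a ^ β)).re := by
      rw [eq5]
      have expand : b * (c • (a ^ α) - a ^ β) * b
          = c • (b * ((a ^ α) * b)) - b * ((a ^ β) * b) := by
        simp [mul_sub, sub_mul, smul_mul_assoc, mul_smul_comm, mul_assoc]
      rw [expand, map_sub, f_real_smul, Complex.sub_re, re_smul]
      rfl
    have hkey_le : (f (b * cfc p a * b)).re ≤ 0 := by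
      rw [key]
      have := Hpos g hg
      linarith
    have final1 : (f (cfc v a)).re ≤ (f (m⁻¹ • (b * cfc p a * b))).re := by
      have he : cfc (fun t => m⁻¹ * (v t * p t)) a = m⁻¹ • (b * cfc p a * b) := by
        rw [eq1, eq2, eq3, eq4]
      rw [← he]
      exact posFun_mono hf step
    have final2 : (f (m⁻¹ • (b * cfc p a * b))).re
        = m⁻¹ * (f (b * cfc p a * b)).re := by
      rw [f_real_smul, re_smul]
    rw [final2] at final1
    have hfin : m⁻¹ * (f (b * cfc p a * b)).re ≤ 0 := by
      have := inv_nonneg.mpr hm.le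
      nlinarith
    linarith
  · have hv_zero : ∀ t ∈ spectrum ℝ a, v t = 0 := by
      intro t ht
      have hcon : ¬ η ≤ w t := fun hcon => hSne ⟨t, ht, hcon⟩
      simp only [hv, max_eq_right_iff]; linarith
    have hzero : cfc v a = 0 := by
      have e : cfc v a = cfc (fun _ : ℝ => (0:ℝ)) a := cfc_congr hv_zero
      rw [e, cfc_const (0:ℝ) a (IsSelfAdjoint.of_nonneg ha), map_zero]
    rw [hzero, map_zero]
    simp

end Aux

/-- If `r_{a^α}` and `r_{a^β}` are equivalent for some `0 < α < β`, then `r_{a^γ}` is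
equivalent to `r_a` for every `γ > 0`. -/
theorem rSeminorm_rpow_equiv (a : A) (ha : 0 ≤ a) (α β : ℝ) (hα : 0 < α) (hαβ : α < β)
    (c C : ℝ) (hc : 0 < c) (hC : 0 < C)
    (h : ∀ f : A →L[ℂ] ℂ, IsHermitianFunctional f →
      c * rSeminorm (a ^ α) f ≤ rSeminorm (a ^ β) f ∧
        rSeminorm (a ^ β) f ≤ C * rSeminorm (a ^ α) f) :
    ∀ γ : ℝ, 0 < γ → ∃ c' C' : ℝ, 0 < c' ∧ 0 < C' ∧
      ∀ f : A →L[ℂ] ℂ, IsHermitianFunctional f →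
        c' * rSeminorm a f ≤ rSeminorm (a ^ γ) f ∧
          rSeminorm (a ^ γ) f ≤ C' * rSeminorm a f := by
  intro γ hγ
  have hβα : 0 < β - α := by linarith
  set ε : ℝ := c ^ (β - α)⁻¹ with hε
  have hεpos : 0 < ε := Real.rpow_pos_of_pos hc _
  set M : ℝ := max (‖a‖ * ‖(1:A)‖) ε with hM
  have hεM : ε ≤ M := le_max_right _ _
  have hMpos : 0 < M := lt_of_lt_of_le hεpos hεM
  have hσ_bound : ∀ t ∈ spectrum ℝ a, t ≤ M := by
    intro t ht
    have h1 := spectrum.norm_le_norm_mul_of_mem ht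
    have h0 : 0 ≤ t := spectrum_nonneg_of_nonneg ha ht
    rw [Real.norm_of_nonneg h0] at h1
    exact h1.trans (le_max_left _ _)
  -- the positive-functional form of the hypothesis
  have Hpos : ∀ g : A →L[ℂ] ℂ, IsPosFunctional g →
      c * (g (a ^ α)).re ≤ (g (a ^ β)).re := by
    intro g hg
    have h1 := (h g (posFun_hermitian hg)).1
    rwa [rSeminorm_posFun hg CFC.rpow_nonneg, rSeminorm_posFun hg CFC.rpow_nonneg] at h1
  set K : ℝ := max (ε ^ (γ - 1)) (M ^ (γ - 1)) with hK
  have hKpos : 0 < K := lt_of_lt_of_le (Real.rpow_pos_of_pos hεpos _) (le_max_left _ _)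
  set K₂ : ℝ := max (ε ^ (1 - γ)) (M ^ (1 - γ)) with hK₂
  have hK₂pos : 0 < K₂ := lt_of_lt_of_le (Real.rpow_pos_of_pos hεpos _) (le_max_left _ _)
  have hfactor : ∀ (δ t : ℝ), ε ≤ t → t ≤ M → t ^ δ ≤ max (ε ^ δ) (M ^ δ) := by
    intro δ t h1 h2
    rcases le_or_gt 0 δ with hδ | hδ
    · exact le_trans (Real.rpow_le_rpow (hεpos.le.trans h1) h2 hδ) (le_max_right _ _)
    · exact le_trans (Real.rpow_le_rpow_of_nonpos hεpos h1 hδ.le) (le_max_left _ _)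
  set u : ℝ → ℝ := fun t => max (t ^ γ - K * t) 0 with hu
  set u₂ : ℝ → ℝ := fun t => max (t - K₂ * t ^ γ) 0 with hu₂
  have hu_cont : Continuous u :=
    ((cont_rpow γ hγ).sub (continuous_const.mul continuous_id)).max continuous_const
  have hu₂_cont : Continuous u₂ :=
    (continuous_id.sub (continuous_const.mul (cont_rpow γ hγ))).max continuous_const
  have hu0 : ∀ t, 0 ≤ u t := fun t => le_max_right _ _
  have hu₂0 : ∀ t, 0 ≤ u₂ t := fun t => le_max_right _ _
  have hu_supp : ∀ t ∈ spectrum ℝ a, (t = 0 ∨ ε ≤ t) → u t = 0 := by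
    intro t ht hcase
    rcases hcase with rfl | hεt
    · simp [hu, Real.zero_rpow hγ.ne']
    · have h2 := hσ_bound t ht
      have h3 : t ^ (γ - 1) ≤ K := hfactor (γ - 1) t hεt h2
      have htpos : 0 < t := lt_of_lt_of_le hεpos hεt
      have h4 : t ^ (γ - 1) * t = t ^ γ := by
        rw [← Real.rpow_add_one htpos.ne' (γ - 1)]; norm_num
      have h5 : t ^ γ ≤ K * t := by
        rw [← h4]; exact mul_le_mul_of_nonneg_right h3 htpos.le
      simp only [hu]
      exact max_eq_right (by linarith)
  have hu₂_supp : ∀ t ∈ spectrum ℝ a, (t = 0 ∨ ε ≤ t) → u₂ t = 0 := by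
    intro t ht hcase
    rcases hcase with rfl | hεt
    · simp [hu₂, Real.zero_rpow hγ.ne']
    · have h2 := hσ_bound t ht
      have h3 : t ^ (1 - γ) ≤ K₂ := hfactor (1 - γ) t hεt h2
      have htpos : 0 < t := lt_of_lt_of_le hεpos hεt
      have h4 : t ^ (1 - γ) * t ^ γ = t := by
        rw [← Real.rpow_add htpos]; norm_num
      have h5 : t ≤ K₂ * t ^ γ := by
        calc t = t ^ (1 - γ) * t ^ γ := h4.symm
          _ ≤ K₂ * t ^ γ := mul_le_mul_of_nonneg_right h3 (Real.rpow_pos_of_pos htpos γ).le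
      simp only [hu₂]
      exact max_eq_right (by linarith)
  -- the operator inequalities
  have ineq1 : a ^ γ ≤ K • a + cfc u a := by
    rw [rpow_eq_cfc_real a ha γ]
    have mono : cfc (fun t : ℝ => t ^ γ) a ≤ cfc (fun t => K * t + u t) a :=
      cfc_mono (fun t _ => by
          have := le_max_left (t ^ γ - K * t) 0
          simp only [hu]; linarith)
        (cont_rpow γ hγ).continuousOn
        ((continuous_const.mul continuous_id).add hu_cont).continuousOn
    have e : cfc (fun t : ℝ => K * t + u t) a = K • a + cfc u a := by
      rw [cfc_add a (fun t => K * t) u (continuous_const.mul continuous_id).continuousOn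
        hu_cont.continuousOn, cfc_const_mul_id K a (IsSelfAdjoint.of_nonneg ha)]
    rw [← e]; exact mono
  have ineq2 : a ≤ K₂ • (a ^ γ) + cfc u₂ a := by
    conv_lhs => rw [← cfc_id ℝ a (IsSelfAdjoint.of_nonneg ha)]
    have mono : cfc (id : ℝ → ℝ) a ≤ cfc (fun t => K₂ * t ^ γ + u₂ t) a :=
      cfc_mono (fun t _ => by
          have := le_max_left (t - K₂ * t ^ γ) 0
          simp only [hu₂, id]; linarith)
        continuous_id.continuousOn
        ((continuous_const.mul (cont_rpow γ hγ)).add hu₂_cont).continuousOn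
    have e : cfc (fun t : ℝ => K₂ * t ^ γ + u₂ t) a = K₂ • (a ^ γ) + cfc u₂ a := by
      rw [cfc_add a (fun t => K₂ * t ^ γ) u₂
        (continuous_const.mul (cont_rpow γ hγ)).continuousOn hu₂_cont.continuousOn,
        cfc_const_mul K₂ _ a (cont_rpow γ hγ).continuousOn, ← rpow_eq_cfc_real a ha γ]
    rw [← e]; exact mono
  -- functional consequences
  have HC : ∀ g : A →L[ℂ] ℂ, IsPosFunctional g → (g (a ^ γ)).re ≤ K * (g a).re := by
    intro g hg
    have m1 := posFun_mono hg ineq1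
    have m2 : (g (K • a + cfc u a)).re = K * (g a).re + (g (cfc u a)).re := by
      rw [map_add, f_real_smul, Complex.add_re, re_smul]
    have m3 := key_annihilation a ha α β hα hαβ c hc Hpos hg u hu_cont hu0 hu_supp
    linarith
  have HC2 : ∀ g : A →L[ℂ] ℂ, IsPosFunctional g → (g a).re ≤ K₂ * (g (a ^ γ)).re := by
    intro g hg
    have m1 := posFun_mono hg ineq2
    have m2 : (g (K₂ • (a ^ γ) + cfc u₂ a)).re
        = K₂ * (g (a ^ γ)).re + (g (cfc u₂ a)).re := by
      rw [map_add, f_real_smul, Complex.add_re, re_smul]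
    have m3 := key_annihilation a ha α β hα hαβ c hc Hpos hg u₂ hu₂_cont hu₂0 hu₂_supp
    linarith
  refine ⟨K₂⁻¹, K, by positivity, hKpos, fun f _ => ⟨?_, ?_⟩⟩
  · have h1 := rSeminorm_le_of_posFun ha CFC.rpow_nonneg hK₂pos HC2 f
    calc K₂⁻¹ * rSeminorm a f ≤ K₂⁻¹ * (K₂ * rSeminorm (a ^ γ) f) :=
        mul_le_mul_of_nonneg_left h1 (inv_nonneg.mpr hK₂pos.le)
      _ = rSeminorm (a ^ γ) f := by field_simp
  · exact rSeminorm_le_of_posFun CFC.rpow_nonneg ha hKpos HC f
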